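/- For all real t with 0 < t and all x > 0, the function g(x,t) = 1 - x - t + (t/x)·(1 - e^{-2x/t}) - (1+x+t)·e^{-2x/t} satisfies g(x,t) ≤ 2 - 2t; in particular g(x,t) < 2 for t > 0. -/

import Mathlib

open Real in
lemma key15 (s : ℝ) (hs : 0 ≤ s) : 2 - 2 * Real.exp (-s) ≤ s * (1 + Real.exp (-s)) := by
  have hF : ∀ y : ℝ, HasDerivAt (fun u : ℝ => u + (u + 2) * Real.exp (-u) - 2)
      (1 - (1 + y) * Real.exp (-y)) y := by
    intro y
    have h1 : HasDerivAt (fun u : ℝ => Real.exp (-u)) (-Real.exp (-y)) y := by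
      simpa [Function.comp_def] using (Real.hasDerivAt_exp (-y)).comp y (hasDerivAt_neg y)
    have h2 : HasDerivAt (fun u : ℝ => (u + 2) * Real.exp (-u))
        (1 * Real.exp (-y) + (y + 2) * (-Real.exp (-y))) y :=
      ((hasDerivAt_id y).add_const 2).mul h1
    have h3 := ((hasDerivAt_id y).add h2).sub_const 2
    refine h3.congr_deriv ?_
    ring
  have hmono : MonotoneOn (fun u : ℝ => u + (u + 2) * Real.exp (-u) - 2) (Set.Ici 0) := by
    apply monotoneOn_of_deriv_nonneg (convex_Ici 0)
    · apply Continuous.continuousOn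
      continuity
    · intro y _
      exact (hF y).differentiableAt.differentiableWithinAt
    · intro y hy
      rw [(hF y).deriv]
      have hy0 : (0:ℝ) ≤ y := le_of_lt (by simpa using hy)
      have h1 : 1 + y ≤ Real.exp y := by linarith [Real.add_one_le_exp y]
      have h2 : (1 + y) * Real.exp (-y) ≤ Real.exp y * Real.exp (-y) :=
        mul_le_mul_of_nonneg_right h1 (Real.exp_pos _).le
      rw [← Real.exp_add] at h2
      simp at h2
      linarith
  have h0 : (fun u : ℝ => u + (u + 2) * Real.exp (-u) - 2) 0
      ≤ (fun u : ℝ => u + (u + 2) * Real.exp (-u) - 2) s :=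
    hmono (Set.self_mem_Ici) hs hs
  simp only [Real.exp_zero, neg_zero] at h0
  nlinarith [h0]

theorem stmt15 (t x : ℝ) (ht : 0 < t) (hx : 0 < x) :
    1 - x - t + (t / x) * (1 - Real.exp (-2 * x / t)) - (1 + x + t) * Real.exp (-2 * x / t)
      ≤ 2 - 2 * t := by
  have hrw : -2 * x / t = -(2 * x / t) := by ring
  rw [hrw]
  set E := Real.exp (-(2 * x / t)) with hE
  have hs : (0:ℝ) ≤ 2 * x / t := by positivity
  have hA := key15 (2 * x / t) hs
  -- clear the division in hA
  have hA' : (2 - 2 * E) * t ≤ 2 * x * (1 + E) := by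
    have h : 2 - 2 * E ≤ 2 * x * (1 + E) / t := by
      calc 2 - 2 * E ≤ 2 * x / t * (1 + E) := hA
        _ = 2 * x * (1 + E) / t := by ring
    exact (le_div_iff₀ ht).mp h
  have hC : t - t * E ≤ x + x * E := by nlinarith
  have hd : t / x * (1 - E) ≤ 1 + E := by
    rw [div_mul_eq_mul_div, div_le_iff₀ hx]
    nlinarith
  nlinarith [hd, hC]
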